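/- Let k > 2 and m ≥ φ(k) + 1 be integers. Then Σ_{a ∈ (ℤ/kℤ)^×} 1/(m - ζ^a) is a real number at most 1, where ζ is a primitive k-th root of unity. Equivalently, writing Φ_k(m+X) = Σ p_d X^d, the coefficients satisfy p_1 ≤ p_0. -/

import Mathlib

open Polynomial

theorem coeff_one_prod_X_add_C (s : Finset ℂ) (c : ℂ → ℂ) :
    (∏ ζ ∈ s, (X + C (c ζ))).coeff 1 = ∑ ζ ∈ s, ∏ η ∈ s.erase ζ, c η := by
  classical
  induction s using Finset.induction_on with
  | empty => simp [coeff_one]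
  | insert a s ha ih =>
    have key : ∑ ζ ∈ s, ∏ η ∈ (insert a s).erase ζ, c η
        = c a * ∑ ζ ∈ s, ∏ η ∈ s.erase ζ, c η := by
      rw [Finset.mul_sum]
      refine Finset.sum_congr rfl fun ζ hζ => ?_
      rw [Finset.erase_insert_of_ne (by rintro rfl; exact ha hζ),
        Finset.prod_insert (fun h => ha (Finset.mem_of_mem_erase h))]
    rw [Finset.prod_insert ha, add_mul, coeff_add, X_mul, coeff_mul_X,
      Finset.sum_insert ha, Finset.erase_insert ha, key,
      coeff_C_mul, ih, coeff_zero_eq_eval_zero, eval_prod]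
    simp only [eval_add, eval_X, eval_C, zero_add]

/-- For `k > 2` and `m ≥ φ(k) + 1`, the sum `Σ_a 1/(m - ζ^a)` over primitive `k`-th
roots of unity is a real number at most `1`; equivalently, writing
`Φ_k(m+X) = Σ p_d X^d`, the coefficients satisfy `p₁ ≤ p₀`. -/
theorem sum_inv_sub_primitive_roots_le_one (k m : ℕ) (hk : 2 < k)
    (hm : Nat.totient k + 1 ≤ m) :
    (∑ ζ ∈ primitiveRoots k ℂ, 1 / ((m : ℂ) - ζ)).im = 0 ∧
      (∑ ζ ∈ primitiveRoots k ℂ, 1 / ((m : ℂ) - ζ)).re ≤ 1 ∧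
      ((cyclotomic k ℤ).comp (X + C (m : ℤ))).coeff 1 ≤
        ((cyclotomic k ℤ).comp (X + C (m : ℤ))).coeff 0 := by
  classical
  have hk0 : 0 < k := by omega
  have htot : 1 ≤ k.totient := Nat.totient_pos.mpr hk0
  have hm2 : 2 ≤ m := by omega
  have hm1 : (1 : ℝ) ≤ (m : ℝ) - 1 := by
    have : (2 : ℝ) ≤ (m : ℝ) := by exact_mod_cast hm2
    linarith
  set s := primitiveRoots k ℂ with hs
  have hcard : s.card = k.totient := Complex.card_primitiveRoots k
  have habs1 : ∀ ζ ∈ s, ‖ζ‖ = 1 := by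
    intro ζ hζ
    have h := (mem_primitiveRoots hk0).1 hζ
    exact Complex.norm_eq_one_of_pow_eq_one h.pow_eq_one (by omega)
  have hlow : ∀ ζ ∈ s, (m : ℝ) - 1 ≤ ‖(m : ℂ) - ζ‖ := by
    intro ζ hζ
    have h := norm_sub_norm_le ((m : ℂ)) ζ
    rw [Complex.norm_natCast, habs1 ζ hζ] at h
    exact h
  have hne : ∀ ζ ∈ s, (m : ℂ) - ζ ≠ 0 := by
    intro ζ hζ h
    have := hlow ζ hζ
    rw [h, norm_zero] at this
    linarith
  set S := ∑ ζ ∈ s, 1 / ((m : ℂ) - ζ) with hS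
  -- Part 1 : the sum is real
  have him : S.im = 0 := by
    rw [← Complex.conj_eq_iff_im]
    rw [hS, map_sum]
    refine Finset.sum_nbij' (fun ζ => (starRingEnd ℂ) ζ) (fun ζ => (starRingEnd ℂ) ζ)
      ?_ ?_ (fun ζ _ => Complex.conj_conj ζ) (fun ζ _ => Complex.conj_conj ζ) ?_
    · intro ζ hζ
      rw [mem_primitiveRoots hk0] at hζ ⊢
      exact hζ.map_of_injective (RingHom.injective _)
    · intro ζ hζ
      rw [mem_primitiveRoots hk0] at hζ ⊢
      exact hζ.map_of_injective (RingHom.injective _)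
    · intro ζ _
      rw [map_div₀, map_one, map_sub, Complex.conj_natCast]
  -- Part 2 : the sum is at most 1
  have hre : S.re ≤ 1 := by
    rw [hS, Complex.re_sum]
    have step : ∀ ζ ∈ s, (1 / ((m : ℂ) - ζ)).re ≤ 1 / ((m : ℝ) - 1) := by
      intro ζ hζ
      have h1 : (1 / ((m : ℂ) - ζ)).re ≤ ‖1 / ((m : ℂ) - ζ)‖ :=
        Complex.re_le_norm _
      rw [norm_div, norm_one] at h1
      refine h1.trans (one_div_le_one_div_of_le (by linarith) (hlow ζ hζ))
    calc ∑ ζ ∈ s, (1 / ((m : ℂ) - ζ)).re ≤ ∑ _ζ ∈ s, 1 / ((m : ℝ) - 1) :=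
          Finset.sum_le_sum step
      _ = (k.totient : ℝ) * (1 / ((m : ℝ) - 1)) := by
          rw [Finset.sum_const, hcard, nsmul_eq_mul]
      _ ≤ 1 := by
          rw [mul_one_div, div_le_one (by linarith)]
          have : (k.totient : ℝ) + 1 ≤ (m : ℝ) := by exact_mod_cast hm
          linarith
  refine ⟨him, hre, ?_⟩
  -- Part 3 : the coefficient inequality
  set P := (cyclotomic k ℤ).comp (X + C (m : ℤ)) with hP
  have hc0pos : 0 < P.coeff 0 := by
    rw [hP, coeff_zero_eq_eval_zero, eval_comp, eval_add, eval_X, eval_C, zero_add]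
    exact cyclotomic_pos hk _
  have hcyc : cyclotomic k ℂ = ∏ ζ ∈ s, (X - C ζ) :=
    cyclotomic_eq_prod_X_sub_primitiveRoots (Complex.isPrimitiveRoot_exp k (by omega))
  have hQ : P.map (Int.castRingHom ℂ) = ∏ ζ ∈ s, (X + C ((m : ℂ) - ζ)) := by
    rw [hP, Polynomial.map_comp, map_cyclotomic, Polynomial.map_add, Polynomial.map_X,
      Polynomial.map_C, hcyc, prod_comp]
    refine Finset.prod_congr rfl fun ζ _ => ?_
    rw [sub_comp, X_comp, C_comp, C_sub, map_natCast]
    ring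
  have hc0 : ((P.coeff 0 : ℤ) : ℂ) = ∏ ζ ∈ s, ((m : ℂ) - ζ) := by
    rw [show ((P.coeff 0 : ℤ) : ℂ) = (Int.castRingHom ℂ) (P.coeff 0) from rfl,
      ← Polynomial.coeff_map, hQ, coeff_zero_eq_eval_zero, eval_prod]
    simp
  have hc1 : ((P.coeff 1 : ℤ) : ℂ) = ∑ ζ ∈ s, ∏ η ∈ s.erase ζ, ((m : ℂ) - η) := by
    rw [show ((P.coeff 1 : ℤ) : ℂ) = (Int.castRingHom ℂ) (P.coeff 1) from rfl,
      ← Polynomial.coeff_map, hQ, coeff_one_prod_X_add_C]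
  have hmulS : ((P.coeff 1 : ℤ) : ℂ) = ((P.coeff 0 : ℤ) : ℂ) * S := by
    rw [hc0, hc1, hS, Finset.mul_sum]
    refine Finset.sum_congr rfl fun ζ hζ => ?_
    rw [← Finset.mul_prod_erase s _ hζ, mul_one_div, mul_comm ((m : ℂ) - ζ),
      mul_div_assoc, div_self (hne ζ hζ), mul_one]
  have hreal : ((P.coeff 1 : ℤ) : ℝ) ≤ ((P.coeff 0 : ℤ) : ℝ) := by
    have h1 : ((P.coeff 1 : ℤ) : ℝ) = ((P.coeff 0 : ℤ) : ℝ) * S.re := by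
      have := congrArg Complex.re hmulS
      simpa [Complex.mul_re, him] using this
    rw [h1]
    calc ((P.coeff 0 : ℤ) : ℝ) * S.re ≤ ((P.coeff 0 : ℤ) : ℝ) * 1 :=
          mul_le_mul_of_nonneg_left hre (by exact_mod_cast hc0pos.le)
      _ = _ := mul_one _
  exact_mod_cast hreal
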